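/- Let p be an odd prime, n a positive integer, r an integer, and S_1 as above. Then S_1(n + p(p−1), r) ≡ −S_1(n, r) (mod p). -/

import Mathlib

/-- `∑_{k ≡ r (mod p), 0 ≤ k ≤ n} (-1)^k C(n,k)`. -/
def S1sum (p n : ℕ) (r : ℤ) : ℤ :=
  ∑ k ∈ Finset.range (n + 1), if (k : ℤ) ≡ r [ZMOD p] then (-1) ^ k * (n.choose k : ℤ) else 0

/-- `S_1(n,r) = p^{-⌊(n-1)/(p-1)⌋} ∑_{k ≡ r (p)} (-1)^k C(n,k)`. -/
def S1 (p n : ℕ) (r : ℤ) : ℤ := S1sum p n r / (p : ℤ) ^ ((n - 1) / (p - 1))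

noncomputable section

namespace Stmt13

open Finset AddMonoidAlgebra

/-- The group ring `ℤ[ℤ/p]`. -/
abbrev R (p : ℕ) : Type := AddMonoidAlgebra ℤ (ZMod p)

/-- The generator `σ` of the group `ℤ/p` inside the group ring. -/
def sg (p : ℕ) : R p := AddMonoidAlgebra.single (1 : ZMod p) (1 : ℤ)

/-- `t = 1 - σ`. -/
def tt (p : ℕ) : R p := 1 - sg p

lemma sg_pow (p k : ℕ) : (sg p) ^ k = AddMonoidAlgebra.single ((k : ZMod p)) (1 : ℤ) := by
  rw [sg, AddMonoidAlgebra.single_pow, one_pow, nsmul_eq_mul, mul_one]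

lemma cast_mul_apply (p : ℕ) (c : ℕ) (x : R p) (a : ZMod p) :
    ((c : R p) * x).coeff a = (c : ℤ) * x.coeff a := by
  rw [AddMonoidAlgebra.natCast_def, AddMonoidAlgebra.coeff_single_zero_mul]

lemma cast_pow_mul_apply (p : ℕ) (c j : ℕ) (x : R p) (a : ZMod p) :
    ((c : R p) ^ j * x).coeff a = (c : ℤ) ^ j * x.coeff a := by
  rw [← Nat.cast_pow, cast_mul_apply, Nat.cast_pow]

/-- coefficients of `t^m` are the alternating binomial sums. -/
lemma tt_pow_apply (p m : ℕ) (r : ℤ) :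
    (tt p ^ m).coeff ((r : ZMod p)) = S1sum p m r := by
  classical
  have h : tt p = (-1 : ℤ) • sg p + 1 := by rw [tt, neg_smul, one_smul]; ring
  have hterm : ∀ k : ℕ, ((-1 : ℤ) • sg p) ^ k * (1 : R p) ^ (m - k) * ((m.choose k : ℕ) : R p)
      = AddMonoidAlgebra.single ((k : ZMod p)) ((-1) ^ k * (m.choose k : ℤ)) := by
    intro k
    rw [one_pow, mul_one, smul_pow, sg_pow, AddMonoidAlgebra.smul_single, smul_eq_mul, mul_one,
      AddMonoidAlgebra.natCast_def, AddMonoidAlgebra.single_mul_single, add_zero]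
  rw [h, add_pow]
  rw [Finset.sum_congr rfl (fun k _ => hterm k)]
  rw [AddMonoidAlgebra.coeff_sum, Finsupp.finset_sum_apply]
  unfold S1sum
  refine Finset.sum_congr rfl (fun k _ => ?_)
  rw [AddMonoidAlgebra.coeff_single_apply]
  refine if_congr ?_ rfl rfl
  rw [show ((k : ℕ) : ZMod p) = ((k : ℤ) : ZMod p) by push_cast; rfl]
  exact ZMod.intCast_eq_intCast_iff (k : ℤ) r p

lemma sg_pow_p {p : ℕ} (hp : p.Prime) : (sg p) ^ p = 1 := by
  rw [sg_pow, ZMod.natCast_self, AddMonoidAlgebra.one_def]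

/-- Key structural identities: `t^p = p·t·(tH-1)` and `(tH-1)^p = p·t·W - 1`. -/
lemma exists_HW {p : ℕ} (hp : p.Prime) (hod : Odd p) :
    ∃ H W : R p, tt p ^ p = (p : R p) * (tt p * (tt p * H - 1)) ∧
      (tt p * H - 1) ^ p = (p : R p) * (tt p * W) - 1 := by
  have hp3 : 3 ≤ p := by
    have h2 := hp.two_le
    rcases hod with ⟨k, hk⟩
    omega
  obtain ⟨s, hs⟩ : ∃ s, p = s + 2 := ⟨p - 2, by omega⟩
  set u : R p := sg p - 1 with hu
  have hut : tt p = -u := by rw [tt, hu]; ring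
  -- binomial expansion of (u+1)^p = σ^p = 1
  have h2 : ∑ k ∈ range (p + 1), u ^ k * ((p.choose k : ℕ) : R p) = 1 := by
    have := add_pow u 1 p
    simp only [one_pow, mul_one] at this
    rw [← this, show u + 1 = sg p by rw [hu]; ring, sg_pow_p hp]
  rw [Finset.sum_range_succ'] at h2
  simp only [pow_zero, Nat.choose_zero_right, Nat.cast_one, mul_one, one_mul] at h2
  rw [add_eq_right] at h2
  -- now peel off the k = 0 and k = s+1 terms of the remaining sum
  rw [show range p = range (s + 1 + 1) by rw [hs], Finset.sum_range_succ',
    Finset.sum_range_succ] at h2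
  -- h2 : ∑ k ∈ range s, u^(k+1+1) * C(p,k+1+1) + u^(s+1+1) * C(p,s+1+1) + u^(0+1)*C(p,0+1) = 0
  have hcp : ((p.choose 1 : ℕ) : R p) = (p : R p) := by rw [Nat.choose_one_right]
  have hcs : (p.choose (s + 1 + 1) : ℕ) = 1 := by
    rw [show s + 1 + 1 = p by omega, Nat.choose_self]
  rw [hcs] at h2
  simp only [Nat.cast_one, mul_one, pow_one, zero_add] at h2
  rw [hcp] at h2
  -- define H
  set H : R p := ∑ k ∈ range s, ((p.choose (k + 2) / p : ℕ) : R p) * u ^ k with hH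
  have hsum : ∑ k ∈ range s, u ^ (k + 1 + 1) * ((p.choose (k + 1 + 1) : ℕ) : R p)
      = (p : R p) * (u * u * H) := by
    rw [hH]
    simp only [Finset.mul_sum]
    refine Finset.sum_congr rfl (fun k hk => ?_)
    have hklt : k < s := Finset.mem_range.mp hk
    have hdvd : p ∣ p.choose (k + 2) := hp.dvd_choose_self (by omega) (by omega)
    have hcast : ((p.choose (k + 2) : ℕ) : R p)
        = (p : R p) * ((p.choose (k + 2) / p : ℕ) : R p) := by
      rw [← Nat.cast_mul, Nat.mul_div_cancel' hdvd]
    rw [show k + 1 + 1 = k + 2 from rfl, hcast]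
    ring
  rw [hsum] at h2
  -- h2 : p * (u*u*H) + u^(s+2) + u * p = 0, with s+2 = p
  have hup : u ^ (s + 1 + 1) = -(tt p ^ p) := by
    rw [show s + 1 + 1 = p by omega, hut, Odd.neg_pow hod, neg_neg]
  rw [hup] at h2
  have h1 : tt p ^ p = (p : R p) * (tt p * (tt p * H - 1)) := by
    have : tt p * (tt p * H - 1) = u * u * H + u := by rw [hut]; ring
    rw [this]
    linear_combination -h2
  -- second part : (tH - 1)^p = p * (t * W) - 1
  set V : R p := tt p * H with hV
  have hUp : (V - 1) ^ p
      = ∑ k ∈ range (p + 1), V ^ k * (-1 : R p) ^ (p - k) * ((p.choose k : ℕ) : R p) := by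
    rw [sub_eq_add_neg, add_pow]
  rw [Finset.sum_range_succ'] at hUp
  simp only [pow_zero, Nat.sub_zero, Nat.choose_zero_right, Nat.cast_one, mul_one, one_mul] at hUp
  rw [Odd.neg_one_pow hod] at hUp
  rw [show range p = range (s + 1 + 1) by rw [hs], Finset.sum_range_succ] at hUp
  rw [hcs] at hUp
  simp only [Nat.cast_one, mul_one, show p - (s + 1 + 1) = 0 by omega, pow_zero] at hUp
  have hVp : V ^ (s + 1 + 1) = (p : R p) * (tt p * ((V - 1) * H ^ p)) := by
    rw [show s + 1 + 1 = p by omega, hV, mul_pow, h1]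
    ring
  set W : R p := (∑ k ∈ range (s + 1),
      H * V ^ k * (-1 : R p) ^ (p - (k + 1)) * ((p.choose (k + 1) / p : ℕ) : R p))
      + (V - 1) * H ^ p with hW
  have hWsum : ∑ k ∈ range (s + 1), V ^ (k + 1) * (-1 : R p) ^ (p - (k + 1))
        * ((p.choose (k + 1) : ℕ) : R p)
      = (p : R p) * (tt p * ∑ k ∈ range (s + 1),
          H * V ^ k * (-1 : R p) ^ (p - (k + 1)) * ((p.choose (k + 1) / p : ℕ) : R p)) := by
    simp only [Finset.mul_sum]
    refine Finset.sum_congr rfl (fun k hk => ?_)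
    have hklt : k < s + 1 := Finset.mem_range.mp hk
    have hdvd : p ∣ p.choose (k + 1) := hp.dvd_choose_self (by omega) (by omega)
    have hcast : ((p.choose (k + 1) : ℕ) : R p)
        = (p : R p) * ((p.choose (k + 1) / p : ℕ) : R p) := by
      rw [← Nat.cast_mul, Nat.mul_div_cancel' hdvd]
    rw [hcast, hV]
    ring
  refine ⟨H, W, h1, ?_⟩
  rw [← hV, hUp, hWsum, hVp, hW]
  ring

/-- The main ring identity: `t^(n+p(p-1)) + p^p t^n = p^(p+1) t^(n+1) W`. -/
lemma key {p : ℕ} (hp : p.Prime) (hod : Odd p) :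
    ∃ W : R p, ∀ m : ℕ,
      tt p ^ (m + 1 + p * (p - 1)) + (p : R p) ^ p * tt p ^ (m + 1)
        = (p : R p) ^ (p + 1) * (tt p ^ (m + 2) * W) := by
  obtain ⟨H, W, h1, h2⟩ := exists_HW hp hod
  have hp3 : 3 ≤ p := by
    have h2 := hp.two_le
    rcases hod with ⟨k, hk⟩
    omega
  obtain ⟨s, hs⟩ : ∃ s, p = s + 1 := ⟨p - 1, by omega⟩
  refine ⟨W, fun m => ?_⟩
  have hA : tt p ^ (m + 1 + p * (p - 1)) = (p : R p) ^ p * (tt p ^ (m + 1) * (tt p * H - 1) ^ p) := by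
    calc tt p ^ (m + 1 + p * (p - 1)) = tt p ^ (m + 1) * (tt p ^ p) ^ s := by
          rw [← pow_mul, ← pow_add, show p - 1 = s by omega]
      _ = tt p ^ (m + 1) * ((p : R p) * (tt p * (tt p * H - 1))) ^ s := by rw [h1]
      _ = (p : R p) ^ s * (tt p ^ m * tt p ^ (s + 1) * (tt p * H - 1) ^ s) := by
          rw [mul_pow, mul_pow]
          ring
      _ = (p : R p) ^ s * (tt p ^ m * tt p ^ p * (tt p * H - 1) ^ s) := by rw [← hs]
      _ = (p : R p) ^ s * (tt p ^ m * ((p : R p) * (tt p * (tt p * H - 1)))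
            * (tt p * H - 1) ^ s) := by rw [h1]
      _ = (p : R p) ^ (s + 1) * (tt p ^ (m + 1) * (tt p * H - 1) ^ (s + 1)) := by ring
      _ = (p : R p) ^ p * (tt p ^ (m + 1) * (tt p * H - 1) ^ p) := by rw [← hs]
  rw [hA, h2]
  ring

/-- Weisman's divisibility, with an auxiliary multiplier. -/
lemma weisman {p : ℕ} (hp : p.Prime) (hod : Odd p) :
    ∀ m, 1 ≤ m → ∀ g : R p, ∀ a : ZMod p,
      (p : ℤ) ^ ((m - 1) / (p - 1)) ∣ (tt p ^ m * g).coeff a := by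
  obtain ⟨H, W, h1, _⟩ := exists_HW hp hod
  have hp3 : 3 ≤ p := by
    have h2 := hp.two_le
    rcases hod with ⟨k, hk⟩
    omega
  intro m
  induction m using Nat.strong_induction_on with
  | _ m ih =>
    intro hm g a
    by_cases hsmall : m < p
    · have h0 : (m - 1) / (p - 1) = 0 := Nat.div_eq_of_lt (by omega)
      rw [h0, pow_zero]
      exact one_dvd _
    · push_neg at hsmall
      obtain ⟨m', hm'⟩ : ∃ m', m = m' + 1 + (p - 1) := ⟨m - p, by omega⟩
      have hdec : tt p ^ m * g = (p : R p) * (tt p ^ (m' + 1) * ((tt p * H - 1) * g)) := by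
        calc tt p ^ m * g = tt p ^ m' * tt p ^ p * g := by
              rw [← pow_add]
              congr 2
              omega
          _ = tt p ^ m' * ((p : R p) * (tt p * (tt p * H - 1))) * g := by rw [h1]
          _ = (p : R p) * (tt p ^ (m' + 1) * ((tt p * H - 1) * g)) := by ring
      rw [hdec, cast_mul_apply]
      have hIH := ih (m' + 1) (by omega) (by omega) ((tt p * H - 1) * g) a
      have hexp : (m - 1) / (p - 1) = (m' + 1 - 1) / (p - 1) + 1 := by
        have h : m - 1 = (m' + 1 - 1) + (p - 1) := by omega
        rw [h, Nat.add_div_right _ (by omega)]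
      rw [hexp, pow_succ']
      exact mul_dvd_mul dvd_rfl hIH

end Stmt13

theorem stmt13 (p n : ℕ) (r : ℤ) (hp : p.Prime) (hodd : Odd p) (hn : 1 ≤ n) :
    S1 p (n + p * (p - 1)) r ≡ -S1 p n r [ZMOD p] := by
  have hp3 : 3 ≤ p := by
    have h2 := hp.two_le
    rcases hodd with ⟨k, hk⟩
    omega
  have hpne : (p : ℤ) ≠ 0 := by positivity
  obtain ⟨m, rfl⟩ : ∃ m, n = m + 1 := ⟨n - 1, by omega⟩
  obtain ⟨W, hW⟩ := Stmt13.key (p := p) hp hodd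
  set e := (m + 1 - 1) / (p - 1) with he
  have heN : (m + 1 + p * (p - 1) - 1) / (p - 1) = e + p := by
    rw [he, show m + 1 + p * (p - 1) - 1 = (m + 1 - 1) + p * (p - 1) by omega,
      Nat.add_mul_div_right _ _ (by omega : 0 < p - 1)]
  set C : ℤ := (Stmt13.tt p ^ (m + 2) * W).coeff ((r : ZMod p)) with hC
  have hid : S1sum p (m + 1 + p * (p - 1)) r + (p : ℤ) ^ p * S1sum p (m + 1) r
      = (p : ℤ) ^ (p + 1) * C := by
    calc S1sum p (m + 1 + p * (p - 1)) r + (p : ℤ) ^ p * S1sum p (m + 1) r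
        = (Stmt13.tt p ^ (m + 1 + p * (p - 1))).coeff ((r : ZMod p))
            + ((p : Stmt13.R p) ^ p * Stmt13.tt p ^ (m + 1)).coeff ((r : ZMod p)) := by
          rw [Stmt13.tt_pow_apply, Stmt13.cast_pow_mul_apply, Stmt13.tt_pow_apply]
      _ = (Stmt13.tt p ^ (m + 1 + p * (p - 1))
            + (p : Stmt13.R p) ^ p * Stmt13.tt p ^ (m + 1)).coeff ((r : ZMod p)) :=
          by rw [AddMonoidAlgebra.coeff_add, Finsupp.add_apply]
      _ = ((p : Stmt13.R p) ^ (p + 1) * (Stmt13.tt p ^ (m + 2) * W)).coeff ((r : ZMod p)) := by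
          rw [hW m]
      _ = (p : ℤ) ^ (p + 1) * C := by rw [Stmt13.cast_pow_mul_apply, hC]
  have hBdvd : (p : ℤ) ^ e ∣ S1sum p (m + 1) r := by
    have h := Stmt13.weisman hp hodd (m + 1) (by omega) 1 ((r : ZMod p))
    rw [mul_one, Stmt13.tt_pow_apply] at h
    exact h
  have hAdvd : (p : ℤ) ^ (e + p) ∣ S1sum p (m + 1 + p * (p - 1)) r := by
    have h := Stmt13.weisman hp hodd (m + 1 + p * (p - 1)) (by omega) 1 ((r : ZMod p))
    rw [mul_one, Stmt13.tt_pow_apply, heN] at h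
    exact h
  have hCdvd : (p : ℤ) ^ e ∣ C := by
    have h := Stmt13.weisman hp hodd (m + 2) (by omega) W ((r : ZMod p))
    refine dvd_trans (pow_dvd_pow _ ?_) h
    rw [he]
    exact Nat.div_le_div_right (by omega)
  obtain ⟨A', hA'⟩ := hAdvd
  obtain ⟨B', hB'⟩ := hBdvd
  obtain ⟨C', hC'⟩ := hCdvd
  have hS1N : S1 p (m + 1 + p * (p - 1)) r = A' := by
    rw [S1, heN, hA', Int.mul_ediv_cancel_left _ (pow_ne_zero _ hpne)]
  have hS1n : S1 p (m + 1) r = B' := by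
    rw [S1, ← he, hB', Int.mul_ediv_cancel_left _ (pow_ne_zero _ hpne)]
  have hfin : A' + B' = (p : ℤ) * C' := by
    apply mul_left_cancel₀ (pow_ne_zero (e + p) hpne)
    calc (p : ℤ) ^ (e + p) * (A' + B')
        = (p : ℤ) ^ (e + p) * A' + (p : ℤ) ^ p * ((p : ℤ) ^ e * B') := by ring
      _ = (p : ℤ) ^ (p + 1) * ((p : ℤ) ^ e * C') := by rw [← hA', ← hB', ← hC']; exact hid
      _ = (p : ℤ) ^ (e + p) * ((p : ℤ) * C') := by ring
  have hdvd : (p : ℤ) ∣ S1 p (m + 1 + p * (p - 1)) r + S1 p (m + 1) r := by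
    rw [hS1N, hS1n, hfin]
    exact dvd_mul_right _ _
  rw [Int.modEq_iff_dvd, show -S1 p (m + 1) r - S1 p (m + 1 + p * (p - 1)) r
    = -(S1 p (m + 1 + p * (p - 1)) r + S1 p (m + 1) r) by ring]
  exact dvd_neg.mpr hdvd
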